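/- arXiv:1611.09821 — 2 statements merged into one kernel-verified Lean document; each statement's English description precedes it below -/
import Mathlib

section
/- Fix an integer j ≥ 0. For π chosen uniformly at random from PF_n, let N₁(π) = #{i : π_i = 1} be the number of ones in π (note N₁(π) ≥ 1 always). Then P(N₁(π) = 1 + j) converges to 1/(e·j!) as n → ∞. -/
/-- A parking function of size `n`, encoded as a list of length `n` with entries in
`{1, …, n}` such that for each `1 ≤ i ≤ n` at least `i` entries are `≤ i`. -/
def IsPFList (n : ℕ) (l : List ℕ) : Prop :=
  l.length = n ∧ (∀ x ∈ l, 1 ≤ x ∧ x ≤ n) ∧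
  ∀ i : ℕ, 1 ≤ i → i ≤ n → i ≤ (l.filter (fun x => x ≤ i)).length

open Filter


open Finset

namespace PFAux

variable (g : ℕ → ℕ)

/-- Prefix-sum random-walk: `D g t = (∑_{i<t} g i) - t`. -/
def D (t : ℕ) : ℤ := (∑ i ∈ Finset.range t, (g i : ℤ)) - t

/-- Running minimum of `D g` over `[0, t]`. -/
def rmin (t : ℕ) : ℤ := (Finset.range (t+1)).inf' ⟨0, by simp⟩ (D g)

lemma D_zero : D g 0 = 0 := by simp [D]

lemma D_succ (t : ℕ) : D g (t+1) = D g t + (g t : ℤ) - 1 := by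
  simp [D, Finset.sum_range_succ]; ring

lemma rmin_zero : rmin g 0 = 0 := by simp [rmin, D]

lemma rmin_succ (t : ℕ) : rmin g (t+1) = min (rmin g t) (D g (t+1)) := by
  have hle : ∀ {s t : ℕ}, s ≤ t → rmin g t ≤ D g s := fun h =>
    Finset.inf'_le _ (by simp [Nat.lt_succ_iff]; omega)
  apply le_antisymm
  · exact le_min (Finset.le_inf' _ _ fun b hb => hle (by simp at hb; omega))
      (hle (le_refl (t+1)))
  · apply Finset.le_inf'
    intro b hb
    simp [Nat.lt_succ_iff] at hb
    rcases Nat.lt_succ_iff_lt_or_eq.mp (Nat.lt_succ_of_le hb) with h | h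
    · exact le_trans (min_le_left _ _) (hle (Nat.lt_succ_iff.mp h))
    · subst h; exact min_le_right _ _

lemma rmin_le {s t : ℕ} (h : s ≤ t) : rmin g t ≤ D g s :=
  Finset.inf'_le _ (by simp [Nat.lt_succ_iff, h])

lemma rmin_attained (t : ℕ) : ∃ q, q ≤ t ∧ rmin g t = D g q := by
  obtain ⟨q, hq, he⟩ := Finset.exists_mem_eq_inf'
    (⟨0, by simp⟩ : (Finset.range (t+1)).Nonempty) (D g)
  refine ⟨q, by simp [Nat.lt_succ_iff] at hq; exact hq, he⟩

lemma rmin_le_rmin {s t : ℕ} (h : s ≤ t) : rmin g t ≤ rmin g s := by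
  induction t with
  | zero => simpa [Nat.le_zero.mp h]
  | succ t ih =>
    rcases Nat.lt_succ_iff_lt_or_eq.mp (Nat.lt_succ_of_le h) with h' | h'
    · exact le_trans (by rw [rmin_succ]; exact min_le_left _ _) (ih (Nat.lt_succ_iff.mp h'))
    · subst h'; exact le_rfl

lemma rmin_succ_ge (t : ℕ) : rmin g t - 1 ≤ rmin g (t+1) := by
  rw [rmin_succ, D_succ]
  have h1 : rmin g t - 1 ≤ rmin g t := by omega
  have h2 : rmin g t - 1 ≤ D g t + (g t : ℤ) - 1 := by
    have := rmin_le g (le_refl t)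
    have : rmin g t ≤ D g t := this
    have hg : (0:ℤ) ≤ (g t : ℤ) := Int.natCast_nonneg _
    omega
  exact le_min h1 h2

/-- `Rec t` : time `t ≥ 1` is a strict record-minimum. -/
def Rec (t : ℕ) : Prop := D g t < rmin g (t-1)

instance : DecidablePred (Rec g) := fun _ => by unfold Rec; infer_instance

lemma rmin_of_rec {t : ℕ} (h : Rec g (t+1)) : rmin g (t+1) = rmin g t - 1 := by
  have h' : D g (t+1) < rmin g t := by simpa [Rec] using h
  have h2 := rmin_succ_ge g t
  rw [rmin_succ] at h2 ⊢
  rcases le_or_gt (rmin g t) (D g (t+1)) with h | h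
  · omega
  · rw [min_eq_right h.le] at h2 ⊢; omega

lemma rmin_of_not_rec {t : ℕ} (h : ¬ Rec g (t+1)) : rmin g (t+1) = rmin g t := by
  have h' : rmin g t ≤ D g (t+1) := by simpa [Rec, not_lt] using h
  rw [rmin_succ]
  omega

/-- Record-counting by telescoping. -/
lemma card_rec (a b : ℕ) (hab : a ≤ b) :
    (((Finset.Ioc a b).filter (Rec g)).card : ℤ) = rmin g a - rmin g b := by
  induction b with
  | zero => simp [Nat.le_zero.mp hab]
  | succ b ih =>
    rcases Nat.lt_succ_iff_lt_or_eq.mp (Nat.lt_succ_of_le hab) with h' | h'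
    · have hab' : a ≤ b := Nat.lt_succ_iff.mp h'
      have hins : Finset.Ioc a (b+1) = insert (b+1) (Finset.Ioc a b) := by
        ext x; simp [Finset.mem_Ioc]; omega
      rw [hins, Finset.filter_insert]
      by_cases hr : Rec g (b+1)
      · rw [if_pos hr, Finset.card_insert_of_notMem (by simp), rmin_of_rec g hr]
        push_cast
        rw [ih hab']
        ring
      · rw [if_neg hr, rmin_of_not_rec g hr, ih hab']
    · subst h'; simp

section Periodic

variable (n m : ℕ) (hper : ∀ x, g (x + n) = g x)
  (hsum : ∑ i ∈ Finset.range n, g i = m) (hm : m < n)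

include hper hsum in
lemma sum_Ico_n (t : ℕ) : ∑ i ∈ Finset.Ico t (t + n), g i = m := by
  induction t with
  | zero => simpa using hsum
  | succ t ih =>
    have h1 : ∑ i ∈ Finset.Ico t (t + n + 1), g i
        = (∑ i ∈ Finset.Ico t (t + n), g i) + g (t + n) := by
      rw [Finset.sum_Ico_succ_top (by omega)]
    have h2 : ∑ i ∈ Finset.Ico t (t + n + 1), g i
        = g t + ∑ i ∈ Finset.Ico (t+1) (t + 1 + n), g i := by
      rw [Finset.sum_eq_sum_Ico_succ_bot (by omega)]
      ring_nf
    rw [hper t] at h1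
    omega

include hper hsum in
lemma D_add_n (t : ℕ) : D g (t + n) = D g t - ((n : ℤ) - m) := by
  have : ∑ i ∈ Finset.range (t + n), (g i : ℤ)
      = (∑ i ∈ Finset.range t, (g i : ℤ)) + ∑ i ∈ Finset.Ico t (t + n), (g i : ℤ) := by
    rw [← Finset.sum_range_add_sum_Ico _ (by omega : t ≤ t + n)]
  have h2 : ∑ i ∈ Finset.Ico t (t + n), (g i : ℤ) = (m : ℤ) := by
    rw [← Nat.cast_sum]
    exact_mod_cast congrArg (Nat.cast : ℕ → ℤ) (sum_Ico_n g n m hper hsum t)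
  simp only [D, this, h2]
  push_cast
  ring

include hper hsum hm in
lemma rmin_two_n : rmin g (2 * n) = rmin g n - ((n : ℤ) - m) := by
  set k : ℤ := (n : ℤ) - m with hk
  apply le_antisymm
  · obtain ⟨q0, hq0n, hq0e⟩ := rmin_attained g n
    have : rmin g (2 * n) ≤ D g (q0 + n) := rmin_le g (by omega)
    rw [D_add_n g n m hper hsum q0, ← hq0e] at this
    omega
  · apply Finset.le_inf'
    intro b hb
    simp [Nat.lt_succ_iff] at hb
    rcases le_or_gt b n with h | h
    · have h1 := rmin_le g h
      have hk0 : (0:ℤ) ≤ k := by simp [hk]; omega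
      calc rmin g n - k ≤ rmin g n := by omega
        _ ≤ D g b := h1
    · have hb' : b - n + n = b := by omega
      have := D_add_n g n m hper hsum (b - n)
      rw [hb'] at this
      have h2 := rmin_le g (show b - n ≤ n by omega)
      omega

/-- Window-condition: every cyclic window of length `ℓ ∈ [1,n]` ending just before `t`
contains at most `ℓ - 1` cars. -/
def Free (t : ℕ) : Prop :=
  ∀ ℓ, 1 ≤ ℓ → ℓ ≤ n → ∑ i ∈ Finset.Ico (t - ℓ) t, g i ≤ ℓ - 1

instance : DecidablePred (Free g n) := fun _ => by unfold Free; infer_instance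

lemma D_sub_window {t ℓ : ℕ} (hℓ : ℓ ≤ t) :
    D g t - D g (t - ℓ) = (∑ i ∈ Finset.Ico (t - ℓ) t, (g i : ℤ)) - ℓ := by
  have : ∑ i ∈ Finset.range t, (g i : ℤ)
      = (∑ i ∈ Finset.range (t - ℓ), (g i : ℤ)) + ∑ i ∈ Finset.Ico (t - ℓ) t, (g i : ℤ) := by
    rw [← Finset.sum_range_add_sum_Ico _ (by omega : t - ℓ ≤ t)]
  simp only [D, this]
  push_cast
  have : ((t - ℓ : ℕ) : ℤ) = (t : ℤ) - ℓ := by omega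
  rw [this]
  ring

lemma rec_iff_all (t : ℕ) (ht : 1 ≤ t) :
    Rec g t ↔ ∀ ℓ, 1 ≤ ℓ → ℓ ≤ t → ∑ i ∈ Finset.Ico (t - ℓ) t, g i ≤ ℓ - 1 := by
  constructor
  · intro h ℓ h1 h2
    have hq : D g t < D g (t - ℓ) := lt_of_lt_of_le h (rmin_le g (by omega))
    have := D_sub_window g (show ℓ ≤ t by omega)
    have hcast : ((∑ i ∈ Finset.Ico (t - ℓ) t, g i : ℕ) : ℤ)
        = ∑ i ∈ Finset.Ico (t - ℓ) t, (g i : ℤ) := by push_cast; rfl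
    omega
  · intro h
    unfold Rec
    obtain ⟨q0, hq0t, hq0e⟩ := rmin_attained g (t - 1)
    rw [hq0e]
    have hℓ : 1 ≤ t - q0 ∧ t - q0 ≤ t := by omega
    have hqq : t - (t - q0) = q0 := by omega
    have hle := h (t - q0) hℓ.1 hℓ.2
    rw [hqq] at hle
    have hD := D_sub_window g (t := t) (ℓ := t - q0) hℓ.2
    rw [hqq] at hD
    have hcast : ((∑ i ∈ Finset.Ico q0 t, g i : ℕ) : ℤ)
        = ∑ i ∈ Finset.Ico q0 t, (g i : ℤ) := by push_cast; rfl
    omega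

include hper hsum hm in
lemma rec_iff_free {t : ℕ} (ht1 : n < t) (ht2 : t ≤ 2 * n) :
    Rec g t ↔ Free g n t := by
  rw [rec_iff_all g t (by omega)]
  constructor
  · intro h ℓ h1 h2
    exact h ℓ h1 (by omega)
  · intro h ℓ h1 h2
    rcases le_or_gt ℓ n with hc | hc
    · exact h ℓ h1 hc
    · -- ℓ > n : split the window into a full period and a remainder
      have hsplit : ∑ i ∈ Finset.Ico (t - ℓ) t, g i
          = (∑ i ∈ Finset.Ico (t - ℓ) (t - ℓ + n), g i)
            + ∑ i ∈ Finset.Ico (t - ℓ + n) t, g i := by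
        rw [Finset.sum_Ico_consecutive _ (by omega : t - ℓ ≤ t - ℓ + n) (by omega)]
      have heq : t - ℓ + n = t - (ℓ - n) := by omega
      rw [hsplit, sum_Ico_n g n m hper hsum, heq]
      have := h (ℓ - n) (by omega) (by omega)
      omega

include hper hsum hm in
theorem card_free_eq : ((Finset.Ioc n (2 * n)).filter (Free g n)).card = n - m := by
  have hcongr : (Finset.Ioc n (2 * n)).filter (Free g n)
      = (Finset.Ioc n (2 * n)).filter (Rec g) := by
    apply Finset.filter_congr
    intro t ht
    simp only [Finset.mem_Ioc] at ht
    exact (rec_iff_free g n m hper hsum hm ht.1 ht.2).symm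
  have h2 := card_rec g n (2 * n) (by omega)
  rw [rmin_two_n g n m hper hsum hm] at h2
  rw [hcongr]
  omega

end Periodic

end PFAux

namespace PFAux

/-- The "good shift" condition: for every `s < n`, at most `n-1-s` of the values
lie in `[s, n-1]`. -/
def Cond (m n : ℕ) (w : Fin m → Fin n) : Prop :=
  ∀ s, s < n → (Finset.univ.filter (fun i => s ≤ (w i).val)).card ≤ n - 1 - s

instance (m n : ℕ) : DecidablePred (Cond m n) := fun _ => by unfold Cond; infer_instance

variable {m n : ℕ}

/-- fiber-counting function associated to `w`. -/
def gw (w : Fin m → Fin n) (x : ℕ) : ℕ :=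
  (Finset.univ.filter (fun i => (w i).val = x % n)).card

lemma gw_per (w : Fin m → Fin n) (x : ℕ) : gw w (x + n) = gw w x := by
  unfold gw
  rw [Nat.add_mod_right]

lemma gw_sum (hn : 0 < n) (w : Fin m → Fin n) : ∑ x ∈ Finset.range n, gw w x = m := by
  have hfib := Finset.card_eq_sum_card_fiberwise
    (f := fun i : Fin m => (w i).val) (s := Finset.univ) (t := Finset.range n)
    (fun i _ => by simp [(w i).isLt])
  simp only [Finset.card_univ, Fintype.card_fin] at hfib
  have heq : ∑ x ∈ Finset.range n, gw w x
      = ∑ x ∈ Finset.range n, (Finset.univ.filter (fun i => (w i).val = x)).card := by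
    apply Finset.sum_congr rfl
    intro q hq
    simp only [Finset.mem_range] at hq
    unfold gw
    rw [Nat.mod_eq_of_lt hq]
  exact heq.trans hfib.symm

lemma count_fiber (hn : 0 < n) (w : Fin m → Fin n) (c : Fin n) {q : ℕ} (hq : q < n) :
    (Finset.univ.filter (fun i => (w i + c).val = q)).card = gw w (q + (n - c.val)) := by
  haveI : NeZero n := ⟨by omega⟩
  unfold gw
  congr 1
  apply Finset.filter_congr
  intro i _
  constructor
  · intro h
    have h1 : w i + c = ⟨q, hq⟩ := Fin.val_injective h
    have h2 : w i = ⟨q, hq⟩ - c := by rw [← h1, add_sub_cancel_right]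
    rw [h2, Fin.sub_def]
    simp [Nat.add_comm]
  · intro h
    have h2 : w i = ⟨q, hq⟩ - c := by
      apply Fin.val_injective
      rw [h, Fin.sub_def]
      simp [Nat.add_comm]
    have : w i + c = ⟨q, hq⟩ := by rw [h2, sub_add_cancel]
    rw [this]

lemma count_window (hn : 0 < n) (w : Fin m → Fin n) (c : Fin n) {s : ℕ} (hs : s < n) :
    (Finset.univ.filter (fun i => s ≤ (w i + c).val)).card
      = ∑ x ∈ Finset.Ico (2*n - c.val - (n - s)) (2*n - c.val), gw w x := by
  have hcv : c.val < n := c.isLt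
  have h1 : (Finset.univ.filter (fun i => s ≤ (w i + c).val)).card
      = ∑ q ∈ Finset.Ico s n,
          ((Finset.univ.filter (fun i => s ≤ (w i + c).val)).filter
            (fun i => (w i + c).val = q)).card := by
    apply Finset.card_eq_sum_card_fiberwise
      (f := fun i : Fin m => (w i + c).val)
    intro i hi
    simp only [Finset.mem_coe, Finset.mem_filter] at hi
    simp [Finset.mem_Ico, hi.2, (w i + c).isLt]
  have h1' : ∀ q ∈ Finset.Ico s n,
      ((Finset.univ.filter (fun i => s ≤ (w i + c).val)).filter
        (fun i => (w i + c).val = q)).card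
      = (Finset.univ.filter (fun i => (w i + c).val = q)).card := by
    intro q hq
    simp only [Finset.mem_Ico] at hq
    rw [Finset.filter_filter]
    congr 1
    apply Finset.filter_congr
    intro i _
    constructor
    · intro hh; exact hh.2
    · intro hh; exact ⟨by omega, hh⟩
  rw [h1, Finset.sum_congr rfl h1']
  have h2 : ∀ q ∈ Finset.Ico s n, (Finset.univ.filter (fun i => (w i + c).val = q)).card
      = gw w (q + (n - c.val)) := by
    intro q hq
    simp only [Finset.mem_Ico] at hq
    exact count_fiber hn w c hq.2
  rw [Finset.sum_congr rfl h2]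
  rw [Finset.sum_Ico_eq_sum_range, Finset.sum_Ico_eq_sum_range]
  have e1 : 2*n - c.val - (2*n - c.val - (n - s)) = n - s := by omega
  rw [e1]
  apply Finset.sum_congr rfl
  intro r hr
  simp only [Finset.mem_range] at hr
  congr 1
  omega

lemma cond_iff_free (hm : m < n) (w : Fin m → Fin n) (c : Fin n) :
    Cond m n (fun i => w i + c) ↔ Free (gw w) n (2*n - c.val) := by
  have hn : 0 < n := by omega
  have hcv : c.val < n := c.isLt
  constructor
  · intro h ℓ h1 h2
    have hs : n - ℓ < n := by omega
    have := h (n - ℓ) hs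
    rw [count_window hn w c hs] at this
    have e1 : n - (n - ℓ) = ℓ := by omega
    rw [e1] at this
    have e2 : 2*n - c.val - ℓ = 2*n - c.val - ℓ := rfl
    omega
  · intro h s hs
    have := h (n - s) (by omega) (by omega)
    rw [count_window hn w c hs]
    have e1 : 2*n - c.val - (n - s) = 2*n - c.val - (n - s) := rfl
    omega

/-- Pollak's cycle argument: for every `w`, exactly `n - m` shifts `c` make `w + c`
satisfy the condition. -/
lemma card_shift (hm : m < n) (w : Fin m → Fin n) :
    (Finset.univ.filter (fun c : Fin n => Cond m n (fun i => w i + c))).card = n - m := by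
  have hn : 0 < n := by omega
  rw [← card_free_eq (gw w) n m (gw_per w) (gw_sum hn w) hm]
  apply Finset.card_bij (fun c _ => 2*n - c.val)
  · intro c hc
    simp only [Finset.mem_filter, Finset.mem_univ, true_and] at hc ⊢
    have hcv : c.val < n := c.isLt
    refine ⟨Finset.mem_Ioc.mpr ⟨by omega, by omega⟩, ?_⟩
    exact (cond_iff_free hm w c).mp hc
  · intro c1 _ c2 _ h
    have := c1.isLt; have := c2.isLt
    exact Fin.val_injective (by omega)
  · intro t ht
    simp only [Finset.mem_filter, Finset.mem_Ioc] at ht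
    haveI : NeZero n := ⟨by omega⟩
    refine ⟨(⟨2*n - t, by omega⟩ : Fin n), ?_, ?_⟩
    · simp only [Finset.mem_filter, Finset.mem_univ, true_and]
      rw [cond_iff_free hm w]
      have : (⟨2*n - t, by omega⟩ : Fin n).val = 2*n - t := rfl
      rw [this]
      have e : 2*n - (2*n - t) = t := by omega
      rw [e]
      exact ht.2
    · have : (⟨2*n - t, by omega⟩ : Fin n).val = 2*n - t := rfl
      rw [this]
      omega

end PFAux

namespace PFAux
variable {m n : ℕ}

lemma card_cond_shift (hn : 0 < n) (c : Fin n) :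
    (Finset.univ.filter (fun w : Fin m → Fin n => Cond m n (fun i => w i + c))).card
      = (Finset.univ.filter (Cond m n)).card := by
  haveI : NeZero n := ⟨by omega⟩
  apply Finset.card_nbij' (i := fun w => fun i => w i + c) (j := fun v => fun i => v i - c)
  · intro w hw
    simp only [Finset.mem_coe, Finset.mem_filter, Finset.mem_univ, true_and] at hw ⊢
    exact hw
  · intro v hv
    simp only [Finset.mem_coe, Finset.mem_filter, Finset.mem_univ, true_and] at hv ⊢
    have : (fun i => v i - c + c) = v := by funext i; exact sub_add_cancel _ _
    rw [this]
    exact hv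
  · intro w _
    funext i
    simp
  · intro v _
    funext i
    simp

lemma card_cond_mul (hm : m < n) :
    (Finset.univ.filter (Cond m n)).card * n = (n - m) * n ^ m := by
  have hn : 0 < n := by omega
  have h1 : ∑ w : Fin m → Fin n,
      (Finset.univ.filter (fun c : Fin n => Cond m n (fun i => w i + c))).card
      = n ^ m * (n - m) := by
    rw [Finset.sum_congr rfl (fun w _ => card_shift hm w), Finset.sum_const,
      Finset.card_univ]
    simp [mul_comm]
  have h2 : ∑ w : Fin m → Fin n,
      (Finset.univ.filter (fun c : Fin n => Cond m n (fun i => w i + c))).card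
      = ∑ c : Fin n,
        (Finset.univ.filter (fun w : Fin m → Fin n => Cond m n (fun i => w i + c))).card := by
    simp only [Finset.card_filter]
    exact Finset.sum_comm
  have h3 : ∑ c : Fin n,
      (Finset.univ.filter (fun w : Fin m → Fin n => Cond m n (fun i => w i + c))).card
      = n * (Finset.univ.filter (Cond m n)).card := by
    rw [Finset.sum_congr rfl (fun c _ => card_cond_shift hn c), Finset.sum_const,
      Finset.card_univ]
    simp
  rw [mul_comm]
  rw [← h3, ← h2, h1]
  ring

lemma card_cond_eq (hm : m < n) (hm1 : 1 ≤ m) :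
    (Finset.univ.filter (Cond m n)).card = (n - m) * n ^ (m - 1) := by
  have hn : 0 < n := by omega
  apply Nat.eq_of_mul_eq_mul_right hn
  rw [card_cond_mul hm, mul_assoc, ← pow_succ]
  congr 2
  omega

lemma card_cond_zero (hn : 0 < n) :
    (Finset.univ.filter (Cond 0 n)).card = 1 := by
  rw [Finset.filter_true_of_mem, Finset.card_univ]
  · simp
  · intro w _
    intro s hs
    simp
end PFAux

namespace PFAux

/-- Parking-function condition for `f : Fin n → Fin n` (values shifted down by 1). -/
def PFfun (n : ℕ) (f : Fin n → Fin n) : Prop :=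
  ∀ t, t < n → t + 1 ≤ (Finset.univ.filter (fun x => (f x).val ≤ t)).card

instance (n : ℕ) : DecidablePred (PFfun n) := fun _ => by unfold PFfun; infer_instance

variable {n m K : ℕ}

lemma count_split [NeZero n] (S : Finset (Fin n)) (hS : S.card = K)
    (e : Fin m ≃ ↥(Sᶜ : Finset (Fin n))) (f : Fin n → Fin n) (w : Fin m → Fin n)
    (hfS : ∀ x, f x = 0 ↔ x ∈ S)
    (hval : ∀ a, (f (e a)).val = (w a).val + 1) (t : ℕ) :
    (Finset.univ.filter fun x => (f x).val ≤ t).card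
      = K + (Finset.univ.filter fun a => (w a).val + 1 ≤ t).card := by
  have hsplit : (Finset.univ.filter fun x => (f x).val ≤ t)
      = S.filter (fun x => (f x).val ≤ t) ∪ Sᶜ.filter (fun x => (f x).val ≤ t) := by
    rw [← Finset.filter_union, Finset.union_compl]
  rw [hsplit, Finset.card_union_of_disjoint
    (Finset.disjoint_filter_filter disjoint_compl_right)]
  have h1 : S.filter (fun x => (f x).val ≤ t) = S := by
    apply Finset.filter_true_of_mem
    intro x hx
    rw [(hfS x).mpr hx]
    simp
  have h2 : (Sᶜ.filter (fun x => (f x).val ≤ t)).card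
      = (Finset.univ.filter fun a => (w a).val + 1 ≤ t).card := by
    symm
    apply Finset.card_bij (fun a _ => ((e a : ↥(Sᶜ : Finset (Fin n))) : Fin n))
    · intro a ha
      simp only [Finset.mem_filter, Finset.mem_univ, true_and] at ha ⊢
      exact ⟨(e a).2, by rw [hval a]; exact ha⟩
    · intro a1 _ a2 _ h
      exact e.injective (Subtype.coe_injective h)
    · intro x hx
      simp only [Finset.mem_filter] at hx
      refine ⟨e.symm ⟨x, hx.1⟩, ?_, ?_⟩
      · simp only [Finset.mem_filter, Finset.mem_univ, true_and]
        have hex : ((e (e.symm ⟨x, hx.1⟩) : ↥(Sᶜ : Finset (Fin n))) : Fin n) = x := by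
          rw [Equiv.apply_symm_apply]
        have := hval (e.symm ⟨x, hx.1⟩)
        rw [hex] at this
        omega
      · rw [Equiv.apply_symm_apply]
  rw [h1, h2, hS]

lemma pffun_iff_cond [NeZero n] (hK1 : 1 ≤ K) (hKn : K ≤ n) (hm : m = n - K)
    (S : Finset (Fin n)) (hS : S.card = K)
    (e : Fin m ≃ ↥(Sᶜ : Finset (Fin n))) (f : Fin n → Fin n) (w : Fin m → Fin n)
    (hfS : ∀ x, f x = 0 ↔ x ∈ S)
    (hval : ∀ a, (f (e a)).val = (w a).val + 1)
    (hwlt : ∀ a, (w a).val + 1 < n) :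
    PFfun n f ↔ Cond m n w := by
  have hcompl : ∀ t : ℕ, 1 ≤ t →
      (Finset.univ.filter fun a => (w a).val + 1 ≤ t).card
        + (Finset.univ.filter fun a : Fin m => t ≤ (w a).val).card = m := by
    intro t ht
    have := Finset.card_filter_add_card_filter_not
      (s := (Finset.univ : Finset (Fin m))) (p := fun a => (w a).val + 1 ≤ t)
    simp only [Finset.card_univ, Fintype.card_fin] at this
    have heq : (Finset.univ.filter fun a : Fin m => ¬ ((w a).val + 1 ≤ t))
        = Finset.univ.filter fun a : Fin m => t ≤ (w a).val := by
      apply Finset.filter_congr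
      intro a _
      simp only [not_le]
      omega
    rw [heq] at this
    exact this
  constructor
  · intro h s hs
    rcases Nat.eq_zero_or_pos s with hs0 | hs0
    · subst hs0
      have : (Finset.univ.filter fun a : Fin m => 0 ≤ (w a).val).card ≤ m := by
        simpa using (Finset.card_filter_le _ _).trans (by simp)
      omega
    · have hps := h s hs
      rw [count_split S hS e f w hfS hval s] at hps
      have hc := hcompl s hs0
      omega
  · intro h t ht
    rw [count_split S hS e f w hfS hval t]
    rcases le_or_gt (t+1) K with hc | hc
    · omega
    · have hcd := h t ht
      have hc2 := hcompl t (by omega)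
      have hmn : m = n - K := hm
      omega

/-- the fiber over a given zero-set `S` has the same cardinality as the set of
`Cond`-sequences. -/
lemma fiber_card [NeZero n] (hK1 : 1 ≤ K) (hKn : K ≤ n) (S : Finset (Fin n)) (hS : S.card = K) :
    ((Finset.univ.filter (fun f : Fin n → Fin n =>
        PFfun n f ∧ (Finset.univ.filter fun i => f i = 0).card = K)).filter
      (fun f => Finset.univ.filter (fun i => f i = 0) = S)).card
      = (Finset.univ.filter (Cond (n - K) n)).card := by
  have hn : 0 < n := by omega
  set m := n - K with hm
  have hScc : (Sᶜ : Finset (Fin n)).card = m := by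
    rw [Finset.card_compl, hS]
    simp [hm]
  let e : Fin m ≃ ↥(Sᶜ : Finset (Fin n)) :=
    ((Sᶜ : Finset (Fin n)).equivFin.trans (finCongr hScc)).symm
  -- one_val : (1 : Fin n).val = 1 % n
  have hone : (1 : Fin n).val = 1 % n := Fin.val_one' n
  apply Finset.card_bij' (i := fun f _ => (fun a => f (e a) - 1))
    (j := fun w _ => (fun x => if h : x ∈ (Sᶜ : Finset (Fin n)) then w (e.symm ⟨x, h⟩) + 1 else 0))
  · -- left inverse
    intro f hf
    simp only [Finset.mem_filter, Finset.mem_univ, true_and] at hf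
    obtain ⟨⟨_, _⟩, hZ⟩ := hf
    funext x
    by_cases h : x ∈ (Sᶜ : Finset (Fin n))
    · simp only [dif_pos h]
      have : (e (e.symm ⟨x, h⟩) : Fin n) = x := by rw [Equiv.apply_symm_apply]
      rw [this]
      simp
    · simp only [dif_neg h]
      simp only [Finset.mem_compl, not_not] at h
      symm
      rw [← hZ] at h
      simp only [Finset.mem_filter] at h
      exact h.2
  · -- right inverse
    intro w _
    funext a
    have hmem := (e a).2
    simp only [dif_pos hmem]
    have hee : (⟨((e a : ↥(Sᶜ : Finset (Fin n))) : Fin n), hmem⟩ : ↥(Sᶜ : Finset (Fin n))) = e a :=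
      Subtype.coe_eta _ _
    rw [hee, Equiv.symm_apply_apply]
    simp


  · -- i maps into target
    intro f hf
    simp only [Finset.mem_filter, Finset.mem_univ, true_and] at hf
    obtain ⟨⟨hpf, _⟩, hZ⟩ := hf
    have hfS : ∀ x, f x = 0 ↔ x ∈ S := by
      intro x
      rw [← hZ]
      simp
    set w : Fin m → Fin n := fun a => f (e a) - 1 with hw
    have hne : ∀ a, f (e a) ≠ 0 := by
      intro a hz
      have := (hfS (e a)).mp hz
      have h2 := (e a).2
      simp only [Finset.mem_compl] at h2
      exact h2 this
    have hval : ∀ a, (f (e a)).val = (w a).val + 1 := by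
      intro a
      have h1n : 1 < n := by have := a.pos; omega
      have hone1 : (1 : Fin n).val = 1 := by rw [hone, Nat.mod_eq_of_lt h1n]
      have h1 : f (e a) = w a + 1 := by rw [hw]; simp only; simp
      have hvala : (f (e a)).val = ((w a).val + 1) % n := by
        rw [h1, Fin.add_def, hone1]
      have hlt : (w a).val < n := (w a).isLt
      rcases Nat.lt_or_ge ((w a).val + 1) n with hy | hy
      · rw [hvala, Nat.mod_eq_of_lt hy]
      · exfalso
        apply hne a
        apply Fin.val_injective
        have : (w a).val + 1 = n := by omega
        rw [hvala, this]
        simp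
    have hwlt : ∀ a, (w a).val + 1 < n := by
      intro a
      have := hval a
      have := (f (e a)).isLt
      omega
    simp only [Finset.mem_filter, Finset.mem_univ, true_and]
    exact (pffun_iff_cond hK1 hKn hm S hS e f w hfS hval hwlt).mp hpf
  · -- j maps into source
    intro w hwmem
    simp only [Finset.mem_filter, Finset.mem_univ, true_and] at hwmem
    set f : Fin n → Fin n := fun x =>
      if h : x ∈ (Sᶜ : Finset (Fin n)) then w (e.symm ⟨x, h⟩) + 1 else 0 with hfdef
    have hwlt : ∀ a, (w a).val + 1 < n := by
      intro a
      have := hwmem (n-1) (by omega)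
      have h2 : (Finset.univ.filter fun i : Fin m => n - 1 ≤ (w i).val).card = 0 := by omega
      rw [Finset.card_eq_zero, Finset.filter_eq_empty_iff] at h2
      have := h2 (Finset.mem_univ a)
      simp only [not_le] at this
      have := (w a).isLt
      omega
    have hplus : ∀ a : Fin m, (w a + 1).val = (w a).val + 1 := by
      intro a
      have h1n : 1 < n := by have := a.pos; omega
      have hone1 : (1 : Fin n).val = 1 := by rw [hone, Nat.mod_eq_of_lt h1n]
      rw [Fin.add_def]
      simp only [hone1]
      rw [Nat.mod_eq_of_lt (by have := hwlt a; omega)]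
    have hfS : ∀ x, f x = 0 ↔ x ∈ S := by
      intro x
      rw [hfdef]
      by_cases h : x ∈ (Sᶜ : Finset (Fin n))
      · simp only [dif_pos h]
        constructor
        · intro hz
          exfalso
          have := hplus (e.symm ⟨x, h⟩)
          rw [hz] at this
          simp at this
        · intro hx
          exfalso
          simp only [Finset.mem_compl] at h
          exact h hx
      · simp only [dif_neg h]
        simp only [Finset.mem_compl, not_not] at h
        simp [h]
    have hval : ∀ a, (f (e a)).val = (w a).val + 1 := by
      intro a
      have hmem := (e a).2
      rw [hfdef]
      simp only
      rw [dif_pos hmem]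
      have hee : (⟨((e a : ↥(Sᶜ : Finset (Fin n))) : Fin n), hmem⟩ : ↥(Sᶜ : Finset (Fin n))) = e a :=
        Subtype.coe_eta _ _
      rw [hee, Equiv.symm_apply_apply]
      exact hplus a
    have hZS : Finset.univ.filter (fun i => f i = 0) = S := by
      ext x
      simp only [Finset.mem_filter, Finset.mem_univ, true_and]
      exact hfS x
    simp only [Finset.mem_filter, Finset.mem_univ, true_and]
    refine ⟨⟨?_, by rw [hZS, hS]⟩, hZS⟩
    exact (pffun_iff_cond hK1 hKn hm S hS e f w hfS hval hwlt).mpr hwmem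

end PFAux

namespace PFAux
variable {n K : ℕ}

theorem card_pffun (n K : ℕ) [NeZero n] (hK1 : 1 ≤ K) (hKn : K ≤ n) :
    (Finset.univ.filter (fun f : Fin n → Fin n =>
      PFfun n f ∧ (Finset.univ.filter fun i => f i = 0).card = K)).card
      = (n-1).choose (K-1) * n ^ (n - K) := by
  have hn : 0 < n := Nat.pos_of_ne_zero (NeZero.ne n)
  have hfib := Finset.card_eq_sum_card_fiberwise
    (f := fun f : Fin n → Fin n => Finset.univ.filter (fun i => f i = 0))
    (s := Finset.univ.filter (fun f : Fin n → Fin n =>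
      PFfun n f ∧ (Finset.univ.filter fun i => f i = 0).card = K))
    (t := Finset.univ.powersetCard K)
    (by
      intro f hf
      simp only [Finset.mem_coe, Finset.mem_filter, Finset.mem_univ, true_and] at hf
      rw [Finset.mem_coe, Finset.mem_powersetCard]
      exact ⟨Finset.subset_univ _, hf.2⟩)
  rw [hfib]
  have hsc : ∀ S ∈ Finset.univ.powersetCard K,
      ((Finset.univ.filter (fun f : Fin n → Fin n =>
        PFfun n f ∧ (Finset.univ.filter fun i => f i = 0).card = K)).filter
          (fun f => Finset.univ.filter (fun i => f i = 0) = S)).card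
      = (Finset.univ.filter (Cond (n - K) n)).card := by
    intro S hs
    rw [Finset.mem_powersetCard] at hs
    exact fiber_card hK1 hKn S hs.2
  rw [Finset.sum_congr rfl hsc, Finset.sum_const, Finset.card_powersetCard,
    Finset.card_univ, Fintype.card_fin]
  clear hfib hsc
  rcases Nat.eq_or_lt_of_le hKn with hKeq | hKlt
  · subst hKeq
    rw [Nat.sub_self, card_cond_zero hn]
    simp [Nat.choose_self]
  · have hm1 : 1 ≤ n - K := by omega
    have hmn : n - K < n := by omega
    rw [card_cond_eq hmn hm1]
    have h1 : n - (n - K) = K := by omega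
    rw [h1, smul_eq_mul]
    have hch : n * (n-1).choose (K-1) = n.choose K * K := by
      have := Nat.add_one_mul_choose_eq (n-1) (K-1)
      have e1 : n - 1 + 1 = n := by omega
      have e2 : K - 1 + 1 = K := by omega
      rw [e1, e2] at this
      exact this
    have hpow : n ^ (n - K) = n * n ^ (n - K - 1) := by
      rw [← pow_succ']
      congr 1
      omega
    calc n.choose K * (K * n ^ (n - K - 1))
        = (n.choose K * K) * n ^ (n - K - 1) := by ring
      _ = (n * (n-1).choose (K-1)) * n ^ (n - K - 1) := by rw [hch]
      _ = (n-1).choose (K-1) * (n * n ^ (n - K - 1)) := by ring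
      _ = (n-1).choose (K-1) * n ^ (n - K) := by rw [← hpow]

lemma card_filter_univ (n : ℕ) (q : Fin n → Prop) [DecidablePred q] :
    (Finset.univ.filter q).card = (List.finRange n).countP (fun i => decide (q i)) := by
  rw [Fin.univ_def]
  rw [List.countP_eq_length_filter]
  rfl

lemma length_filter_ofFn (n : ℕ) (g : Fin n → ℕ) (p : ℕ → Bool) :
    ((List.ofFn g).filter p).length = (Finset.univ.filter (fun i => p (g i) = true)).card := by
  rw [← List.countP_eq_length_filter, List.ofFn_eq_map, List.countP_map,
    card_filter_univ]
  congr 1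
  funext i
  simp [Function.comp]

end PFAux

namespace PFAux

def pfmap (n : ℕ) (f : Fin n → Fin n) : List ℕ := List.ofFn (fun i => (f i).val + 1)

lemma pfmap_injective (n : ℕ) : Function.Injective (pfmap n) := by
  intro f g h
  unfold pfmap at h
  rw [List.ofFn_inj] at h
  funext i
  have := congrFun h i
  exact Fin.val_injective (by omega)

lemma count_ofFn (n : ℕ) (g : Fin n → ℕ) (a : ℕ) :
    (List.ofFn g).count a = (Finset.univ.filter (fun i => g i = a)).card := by
  have h1 : (List.ofFn g).count a = (List.ofFn g).countP (fun x => x == a) := rfl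
  rw [h1, List.ofFn_eq_map, List.countP_map, card_filter_univ]
  congr 1

lemma filter_le_ofFn (n : ℕ) (f : Fin n → Fin n) (t : ℕ) :
    ((pfmap n f).filter (fun x => x ≤ t + 1)).length
      = (Finset.univ.filter (fun i => (f i).val ≤ t)).card := by
  unfold pfmap
  rw [length_filter_ofFn]
  congr 1
  ext i
  simp only [Finset.mem_filter, Finset.mem_univ, true_and, decide_eq_true_eq]
  omega

lemma count_pfmap (n : ℕ) (f : Fin n → Fin n) (a : ℕ) :
    (pfmap n f).count a = (Finset.univ.filter (fun i => (f i).val + 1 = a)).card := by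
  unfold pfmap
  rw [count_ofFn]

lemma set_eq (n K : ℕ) [NeZero n] :
    {l : List ℕ | IsPFList n l ∧ l.count 1 = K}
      = ↑((Finset.univ.filter (fun f : Fin n → Fin n =>
          PFfun n f ∧ (Finset.univ.filter fun i => f i = 0).card = K)).image (pfmap n)) := by
  have hn : 0 < n := Nat.pos_of_ne_zero (NeZero.ne n)
  ext l
  simp only [Set.mem_setOf_eq, Finset.coe_image, Set.mem_image, Finset.mem_coe,
    Finset.mem_filter, Finset.mem_univ, true_and]
  constructor
  · rintro ⟨⟨hlen, hmem, hcond⟩, hcount⟩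
    have hlt : ∀ i : Fin n, (i : ℕ) < l.length := fun i => by rw [hlen]; exact i.isLt
    have hex : ∃ f : Fin n → Fin n, pfmap n f = l := by
      have hbd : ∀ i : Fin n, 1 ≤ l[(i:ℕ)]'(hlt i) ∧ l[(i:ℕ)]'(hlt i) ≤ n :=
        fun i => hmem _ (List.getElem_mem _)
      refine ⟨fun i => ⟨l[(i:ℕ)]'(hlt i) - 1, by have := (hbd i).2; omega⟩, ?_⟩
      apply List.ext_getElem
      · simp [pfmap, hlen]
      · intro i h1 h2
        have hi : i < n := by simpa [pfmap] using h1
        have h3 := (hbd ⟨i, hi⟩).1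
        simp only [Fin.val_mk] at h3
        simp only [pfmap, List.getElem_ofFn, Fin.val_mk]
        omega
    obtain ⟨f, hpl⟩ := hex
    refine ⟨f, ⟨?_, ?_⟩, hpl⟩
    · intro t ht
      have := hcond (t+1) (by omega) (by omega)
      rw [← hpl, filter_le_ofFn] at this
      exact this
    · rw [← hpl, count_pfmap] at hcount
      rw [← hcount]
      congr 1
      ext i
      simp only [Finset.mem_filter, Finset.mem_univ, true_and]
      rw [Fin.ext_iff]
      simp only [Fin.val_zero]
      omega
  · rintro ⟨f, ⟨hpf, hz⟩, hfl⟩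
    subst hfl
    refine ⟨⟨by simp [pfmap], ?_, ?_⟩, ?_⟩
    · intro x hx
      rw [pfmap, List.mem_ofFn] at hx
      obtain ⟨i, hi⟩ := hx
      have := (f i).isLt
      omega
    · intro i hi1 hin
      have := hpf (i-1) (by omega)
      have he : i - 1 + 1 = i := by omega
      rw [← he, filter_le_ofFn]
      omega
    · rw [count_pfmap, ← hz]
      congr 1
      ext i
      simp only [Finset.mem_filter, Finset.mem_univ, true_and]
      rw [Fin.ext_iff]
      simp only [Fin.val_zero]
      omega

theorem ncard_eq (n K : ℕ) (hn : 0 < n) (hK1 : 1 ≤ K) (hKn : K ≤ n) :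
    {l : List ℕ | IsPFList n l ∧ l.count 1 = K}.ncard
      = (n-1).choose (K-1) * n ^ (n - K) := by
  haveI : NeZero n := ⟨by omega⟩
  rw [set_eq n K, Set.ncard_coe_finset,
    Finset.card_image_of_injective _ (pfmap_injective n), card_pffun n K hK1 hKn]

end PFAux


namespace PFAux

lemma tendsto_ratio (i : ℕ) :
    Tendsto (fun n : ℕ => ((n - 1 - i : ℕ) : ℝ) / (n : ℝ)) atTop (nhds 1) := by
  have h1 : Tendsto (fun n : ℕ => 1 - ((1 + i : ℝ)) / (n : ℝ)) atTop (nhds 1) := by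
    have := (tendsto_const_div_atTop_nhds_zero_nat (1 + i : ℝ)).const_sub 1
    simpa using this
  apply h1.congr'
  filter_upwards [eventually_ge_atTop (i + 2)] with n hn
  have hcast : ((n - 1 - i : ℕ) : ℝ) = (n : ℝ) - (1 + i) := by
    have : ((n - 1 - i : ℕ) : ℝ) = ((n : ℕ) : ℝ) - ((1 + i : ℕ) : ℝ) := by
      rw [← Nat.cast_sub (by omega)]
      congr 1
      omega
    rw [this]
    push_cast
    ring
  have hn0 : (n : ℝ) ≠ 0 := by
    have : 0 < n := by omega
    positivity
  rw [hcast]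
  field_simp

lemma tendsto_A (j : ℕ) :
    Tendsto (fun n : ℕ => (((n - 1).choose j : ℕ) : ℝ) / (n : ℝ) ^ j) atTop
      (nhds (1 / (Nat.factorial j : ℝ))) := by
  have hG : Tendsto (fun n : ℕ => ∏ i ∈ Finset.range j, (((n - 1 - i : ℕ) : ℝ) / (n : ℝ)))
      atTop (nhds (∏ _i ∈ Finset.range j, (1:ℝ))) :=
    tendsto_finset_prod _ (fun i _ => tendsto_ratio i)
  simp only [Finset.prod_const_one] at hG
  have h2 : Tendsto (fun n : ℕ => (1 / (Nat.factorial j : ℝ)) *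
      ∏ i ∈ Finset.range j, (((n - 1 - i : ℕ) : ℝ) / (n : ℝ))) atTop
      (nhds (1 / (Nat.factorial j : ℝ))) := by
    have := hG.const_mul (1 / (Nat.factorial j : ℝ))
    simpa using this
  apply h2.congr'
  filter_upwards [eventually_ge_atTop (j + 1)] with n hn
  have hn0 : (n : ℝ) ≠ 0 := by
    have : 0 < n := by omega
    positivity
  have hfac : ((Nat.factorial j : ℕ) : ℝ) ≠ 0 := by
    exact_mod_cast Nat.factorial_ne_zero j
  have hdesc : ((n-1).descFactorial j : ℝ) = (Nat.factorial j : ℝ) * ((n - 1).choose j : ℝ) := by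
    exact_mod_cast congrArg (Nat.cast : ℕ → ℝ) (Nat.descFactorial_eq_factorial_mul_choose (n-1) j)
  have hprod : ((n-1).descFactorial j : ℝ) = ∏ i ∈ Finset.range j, ((n - 1 - i : ℕ) : ℝ) := by
    rw [Nat.descFactorial_eq_prod_range]
    push_cast
    rfl
  rw [Finset.prod_div_distrib, Finset.prod_const, Finset.card_range, ← hprod, hdesc]
  field_simp

lemma tendsto_B :
    Tendsto (fun n : ℕ => (1 + 1 / (n:ℝ)) ^ (n - 1)) atTop (nhds (Real.exp 1)) := by
  have h1 : Tendsto (fun n : ℕ => (1 + 1 / (n:ℝ)) ^ n) atTop (nhds (Real.exp 1)) := by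
    have := Real.tendsto_one_add_div_pow_exp 1
    simpa using this
  have h2 : Tendsto (fun n : ℕ => (1 + 1 / (n:ℝ))) atTop (nhds 1) := by
    have := (tendsto_const_div_atTop_nhds_zero_nat (1 : ℝ)).const_add 1
    simpa using this
  have h3 := h1.div h2 (by norm_num)
  simp only [div_one] at h3
  apply h3.congr'
  filter_upwards [eventually_ge_atTop 1] with n hn
  have hpos : (0:ℝ) < 1 + 1 / (n:ℝ) := by positivity
  simp only [Pi.div_apply]
  rw [pow_sub₀ _ (ne_of_gt hpos) hn, pow_one, div_eq_mul_inv]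


end PFAux

theorem stmt16 (j : ℕ) :
    Filter.Tendsto
      (fun n : ℕ =>
        (Set.ncard {l : List ℕ | IsPFList n l ∧ l.count 1 = 1 + j} : ℝ) /
          ((n : ℝ) + 1) ^ (n - 1))
      Filter.atTop (nhds (1 / (Real.exp 1 * (Nat.factorial j : ℝ)))) := by
  have hA := PFAux.tendsto_A j
  have hB := PFAux.tendsto_B
  have hexp : Real.exp 1 ≠ 0 := Real.exp_ne_zero 1
  have hlim := hA.div hB hexp
  have hval : (1 / (Nat.factorial j : ℝ)) / Real.exp 1
      = 1 / (Real.exp 1 * (Nat.factorial j : ℝ)) := by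
    rw [div_div, mul_comm]
  rw [hval] at hlim
  apply hlim.congr'
  filter_upwards [eventually_ge_atTop (j + 2)] with n hn
  rw [PFAux.ncard_eq n (1 + j) (by omega) (by omega) (by omega)]
  have he1 : 1 + j - 1 = j := by omega
  have he2 : n - (1 + j) = n - 1 - j := by omega
  rw [he1, he2]
  have hn0 : (n : ℝ) ≠ 0 := by
    have : 0 < n := by omega
    positivity
  have hn1 : (n : ℝ) + 1 ≠ 0 := by positivity
  have hb : (1 : ℝ) + 1 / n = ((n : ℝ) + 1) / n := by field_simp
  have hpow : (n:ℝ) ^ (n - 1) = (n:ℝ) ^ j * (n:ℝ) ^ (n - 1 - j) := by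
    rw [← pow_add]
    congr 1
    omega
  simp only [Pi.div_apply]
  rw [hb, div_pow]
  push_cast
  rw [div_div_div_eq, hpow]
  field_simp
end

section
/- Let n ≥ 1 and let ⪯ be a partial order on {1, …, n} that is a disjoint union of chains, i.e., the comparability relation (i ∼ j iff i ⪯ j or j ⪯ i) is an equivalence relation. Call a function g from {1,…,n} to a linearly ordered set P-monotone if i ≺ j implies g(i) < g(j). Then #{ f : {1,…,n} → {1,…,n+1} : f is P-monotone } = (n+1) · #{ π ∈ PF_n : π is P-monotone }, where π ∈ PF_n is viewed as a function {1,…,n} → {1,…,n+1} taking values in {1,…,n}. Equivalently, the probability of being P-monotone is the same for a uniformly random parking function of size n and for a uniformly random function from {1,…,n} to {1,…,n+1}. -/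
set_option linter.unusedSectionVars false
set_option maxHeartbeats 1000000

/-- A parking function of size `n`, encoded as a function `Fin n → ℕ` with values in
`{1, …, n}` such that for each `1 ≤ i ≤ n` at least `i` entries are `≤ i`. -/
def IsPFFun (n : ℕ) (π : Fin n → ℕ) : Prop :=
  (∀ k, 1 ≤ π k ∧ π k ≤ n) ∧
  ∀ i : ℕ, 1 ≤ i → i ≤ n → i ≤ (Finset.univ.filter (fun k => π k ≤ i)).card

open Finset

noncomputable def fnth (S : Finset ℕ) (i : ℕ) : ℕ :=
  if h : i < S.card then S.orderEmbOfFin rfl ⟨i, h⟩ else 0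

lemma fnth_mem {S : Finset ℕ} {i : ℕ} (h : i < S.card) : fnth S i ∈ S := by
  rw [fnth, dif_pos h]; exact S.orderEmbOfFin_mem rfl _

lemma fnth_lt_fnth {S : Finset ℕ} {i j : ℕ} (hij : i < j) (h : j < S.card) :
    fnth S i < fnth S j := by
  rw [fnth, fnth, dif_pos h, dif_pos (hij.trans h)]
  exact (S.orderEmbOfFin rfl).strictMono (show (⟨i, hij.trans h⟩ : Fin S.card) < ⟨j, h⟩ from hij)

lemma card_filter_lt_fnth {S : Finset ℕ} {i : ℕ} (h : i < S.card) :
    (S.filter (fun x => x < fnth S i)).card = i := by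
  classical
  rw [fnth, dif_pos h]
  have himg : S.filter (fun x => x < S.orderEmbOfFin rfl ⟨i, h⟩)
      = (Finset.univ.filter (fun t : Fin S.card => t < (⟨i, h⟩ : Fin S.card))).image
          (fun t => S.orderEmbOfFin rfl t) := by
    ext x
    simp only [mem_filter, mem_image, mem_univ, true_and]
    constructor
    · rintro ⟨hxS, hxlt⟩
      have : x ∈ Set.range (S.orderEmbOfFin rfl) := by
        rw [S.range_orderEmbOfFin rfl]; exact hxS
      obtain ⟨t, ht⟩ := this
      exact ⟨t, by rw [← ht] at hxlt; exact (S.orderEmbOfFin rfl).strictMono.lt_iff_lt.mp hxlt, ht⟩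
    · rintro ⟨t, htlt, rfl⟩
      exact ⟨S.orderEmbOfFin_mem rfl t, (S.orderEmbOfFin rfl).strictMono htlt⟩
  rw [himg, Finset.card_image_of_injective _ (S.orderEmbOfFin rfl).injective]
  have : (Finset.univ.filter (fun t : Fin S.card => t < (⟨i, h⟩ : Fin S.card)))
      = Finset.Iio ⟨i, h⟩ := by ext t; simp
  rw [this, Fin.card_Iio]

lemma fnth_eq {S : Finset ℕ} {a i : ℕ} (ha : a ∈ S)
    (hcount : (S.filter (fun x => x < a)).card = i) : fnth S i = a := by
  have : a ∈ Set.range (S.orderEmbOfFin rfl) := by rw [S.range_orderEmbOfFin rfl]; exact ha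
  obtain ⟨t, ht⟩ := this
  have h1 : (S.filter (fun x => x < fnth S t.1)).card = t.1 := card_filter_lt_fnth t.2
  have h2 : fnth S t.1 = a := by rw [fnth, dif_pos t.2]; simpa using ht
  rw [h2] at h1
  have : i = t.1 := by rw [← hcount, h1]
  rw [this, h2]

section Chains
open scoped Classical

variable {n : ℕ} (r : Fin n → Fin n → Prop)

noncomputable def chainF (k : Fin n) : Finset (Fin n) :=
  Finset.univ.filter (fun j => r k j ∨ r j k)

noncomputable def rankF (k : Fin n) : ℕ :=
  (Finset.univ.filter (fun j => r j k ∧ j ≠ k)).card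

noncomputable def shiftT (f : Fin n → ℕ) (c : ℕ) (k : Fin n) : Finset ℕ :=
  (chainF r k).image (fun j => (f j - 1 + c) % (n + 1))

noncomputable def psi (f : Fin n → ℕ) (c : ℕ) (k : Fin n) : ℕ :=
  fnth (shiftT r f c k) (rankF r k) + 1

variable {r}
variable (hpo : IsPartialOrder (Fin n) r)
variable (hchain : ∀ i j k : Fin n, (r i j ∨ r j i) → (r j k ∨ r k j) → (r i k ∨ r k i))

lemma mem_chainF {k j : Fin n} : j ∈ chainF r k ↔ (r k j ∨ r j k) := by
  simp [chainF]

include hpo in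
lemma self_mem_chainF (k : Fin n) : k ∈ chainF r k := by
  simp [chainF]; exact hpo.refl k

include hchain in
lemma chainF_eq {i j : Fin n} (hij : r i j ∨ r j i) : chainF r i = chainF r j := by
  ext j'
  simp only [chainF, mem_filter, mem_univ, true_and]
  exact ⟨fun h => hchain j i j' (Or.symm hij) h, fun h => hchain i j j' hij h⟩

include hchain in
lemma chainF_total {k j j' : Fin n} (hj : j ∈ chainF r k) (hj' : j' ∈ chainF r k) :
    r j j' ∨ r j' j := by
  simp only [chainF, mem_filter, mem_univ, true_and] at hj hj'
  exact hchain j k j' (Or.symm hj) hj'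

include hpo in
lemma rankF_lt_card (k : Fin n) : rankF r k < (chainF r k).card := by
  have hsub : (Finset.univ.filter (fun j => r j k ∧ j ≠ k)) ⊆ (chainF r k).erase k := by
    intro j hj
    simp only [mem_filter, mem_univ, true_and] at hj
    exact Finset.mem_erase.mpr ⟨hj.2, by simp [chainF]; exact Or.inr hj.1⟩
  calc rankF r k ≤ ((chainF r k).erase k).card := Finset.card_le_card hsub
    _ < (chainF r k).card := Finset.card_erase_lt_of_mem (self_mem_chainF hpo k)

include hpo in
lemma rankF_lt_rankF {i j : Fin n} (hij : r i j) (hne : i ≠ j) : rankF r i < rankF r j := by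
  have hsub : insert i (Finset.univ.filter (fun j' => r j' i ∧ j' ≠ i))
      ⊆ (Finset.univ.filter (fun j' => r j' j ∧ j' ≠ j)) := by
    intro j' hj'
    rcases Finset.mem_insert.mp hj' with h | h
    · subst h; simp only [mem_filter, mem_univ, true_and]; exact ⟨hij, hne⟩
    · simp only [mem_filter, mem_univ, true_and] at h ⊢
      refine ⟨hpo.trans _ _ _ h.1 hij, ?_⟩
      rintro rfl
      exact hne (hpo.antisymm _ _ hij h.1)
  have hnotmem : i ∉ Finset.univ.filter (fun j' => r j' i ∧ j' ≠ i) := by simp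
  have := Finset.card_le_card hsub
  rw [Finset.card_insert_of_notMem hnotmem] at this
  exact Nat.lt_of_succ_le this

variable {f : Fin n → ℕ} (hf1 : ∀ k, 1 ≤ f k ∧ f k ≤ n + 1)
variable (hf2 : ∀ i j : Fin n, r i j → i ≠ j → f i < f j)

include hchain hf2 in
lemma f_injOn_chain {k : Fin n} : ∀ j ∈ chainF r k, ∀ j' ∈ chainF r k, f j = f j' → j = j' := by
  intro j hj j' hj' hff
  by_contra hne
  rcases chainF_total hchain hj hj' with h | h
  · exact absurd hff (Nat.ne_of_lt (hf2 _ _ h hne))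
  · exact absurd hff.symm (Nat.ne_of_lt (hf2 _ _ h (Ne.symm hne)))

include hf1 in
lemma shift_cancel {c : ℕ} {j j' : Fin n}
    (h : (f j - 1 + c) % (n + 1) = (f j' - 1 + c) % (n + 1)) : f j = f j' := by
  have h1 := (hf1 j).1; have h2 := (hf1 j).2
  have h3 := (hf1 j').1; have h4 := (hf1 j').2
  have hmod : (f j - 1) % (n + 1) = (f j' - 1) % (n + 1) :=
    Nat.ModEq.add_right_cancel' c h
  rw [Nat.mod_eq_of_lt (by omega), Nat.mod_eq_of_lt (by omega)] at hmod
  omega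

include hchain hf1 hf2 in
lemma card_shiftT (c : ℕ) (k : Fin n) : (shiftT r f c k).card = (chainF r k).card := by
  apply Finset.card_image_of_injOn
  intro j hj j' hj' h
  exact f_injOn_chain hchain hf2 j hj j' hj' (shift_cancel hf1 h)

include hpo hchain hf1 hf2 in
lemma rankF_lt_card_shiftT (c : ℕ) (k : Fin n) : rankF r k < (shiftT r f c k).card := by
  rw [card_shiftT hchain hf1 hf2]; exact rankF_lt_card hpo k

include hpo hchain hf1 hf2 in
lemma psi_bounds (c : ℕ) (k : Fin n) : 1 ≤ psi r f c k ∧ psi r f c k ≤ n + 1 := by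
  constructor
  · unfold psi; omega
  · have hmem := fnth_mem (rankF_lt_card_shiftT hpo hchain hf1 hf2 c k)
    obtain ⟨j, _, hval⟩ := Finset.mem_image.mp hmem
    have : (f j - 1 + c) % (n + 1) < n + 1 := Nat.mod_lt _ (by omega)
    unfold psi; omega

include hpo hchain hf1 hf2 in
lemma psi_mono {i j : Fin n} (c : ℕ) (hij : r i j) (hne : i ≠ j) :
    psi r f c i < psi r f c j := by
  have hcij : chainF r i = chainF r j := chainF_eq hchain (Or.inl hij)
  have hT : shiftT r f c i = shiftT r f c j := by unfold shiftT; rw [hcij]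
  unfold psi; rw [hT]
  have := fnth_lt_fnth (rankF_lt_rankF hpo hij hne)
    (rankF_lt_card_shiftT hpo hchain hf1 hf2 c j)
  omega

include hpo hchain hf1 hf2 in
lemma injOn_psi (c : ℕ) {k : Fin n} :
    ∀ j ∈ chainF r k, ∀ j' ∈ chainF r k, psi r f c j - 1 = psi r f c j' - 1 → j = j' := by
  intro j hj j' hj' h
  by_contra hne
  have e1 : 1 ≤ psi r f c j := (psi_bounds hpo hchain hf1 hf2 c j).1
  have e2 : 1 ≤ psi r f c j' := (psi_bounds hpo hchain hf1 hf2 c j').1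
  rcases chainF_total hchain hj hj' with hc | hc
  · have := psi_mono hpo hchain hf1 hf2 c hc hne; omega
  · have := psi_mono hpo hchain hf1 hf2 c hc (Ne.symm hne); omega

include hpo hchain hf1 hf2 in
lemma image_psi (c : ℕ) (k : Fin n) :
    (chainF r k).image (fun j => psi r f c j - 1) = shiftT r f c k := by
  apply Finset.eq_of_subset_of_card_le
  · intro x hx
    obtain ⟨j, hj, rfl⟩ := Finset.mem_image.mp hx
    have hcj : chainF r j = chainF r k := chainF_eq hchain (Or.symm (mem_chainF.mp hj))
    have h1 : psi r f c j - 1 = fnth (shiftT r f c j) (rankF r j) := by unfold psi; omega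
    have hT : shiftT r f c j = shiftT r f c k := by unfold shiftT; rw [hcj]
    rw [h1, hT]
    have := rankF_lt_card_shiftT hpo hchain hf1 hf2 c j
    rw [hT] at this
    exact fnth_mem this
  · rw [card_shiftT hchain hf1 hf2,
      Finset.card_image_of_injOn (fun j hj j' hj' h => injOn_psi hpo hchain hf1 hf2 c j hj j' hj' h)]
include hpo hchain hf1 hf2 in
lemma count_psi (c : ℕ) (q : ℕ → Prop) [DecidablePred q] :
    (Finset.univ.filter (fun k => q (psi r f c k - 1))).card
      = (Finset.univ.filter (fun k => q ((f k - 1 + c) % (n + 1)))).card := by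
  classical
  set rep : Fin n → Fin n := fun k => (insert k (chainF r k)).min' (Finset.insert_nonempty _ _)
    with hrepdef
  have hins : ∀ k : Fin n, insert k (chainF r k) = chainF r k :=
    fun k => Finset.insert_eq_self.mpr (self_mem_chainF hpo k)
  have hmin' : ∀ (s t : Finset (Fin n)) (hs : s.Nonempty) (ht : t.Nonempty), s = t →
      s.min' hs = t.min' ht := by intro s t hs ht h; subst h; rfl
  have hrepmem : ∀ k, rep k ∈ chainF r k := by
    intro k
    have h2 : rep k = (chainF r k).min' ⟨k, self_mem_chainF hpo k⟩ := hmin' _ _ _ _ (hins k)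
    rw [h2]; exact Finset.min'_mem _ _
  have hrep_eq : ∀ k j, j ∈ chainF r k → rep j = rep k := by
    intro k j hj
    have hcc : chainF r j = chainF r k := chainF_eq hchain (Or.symm (mem_chainF.mp hj))
    exact hmin' _ _ _ _ (by rw [hins j, hins k, hcc])
  have hfiber : ∀ t : Fin n, t ∈ Finset.univ.image rep →
      (Finset.univ.filter (fun k => rep k = t)) = chainF r t := by
    intro t ht
    obtain ⟨k₀, _, rfl⟩ := Finset.mem_image.mp ht
    have h0 : rep (rep k₀) = rep k₀ := hrep_eq k₀ (rep k₀) (hrepmem k₀)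
    ext j
    simp only [mem_filter, mem_univ, true_and]
    constructor
    · intro hj; rw [← hj]
      exact mem_chainF.mpr (Or.symm (mem_chainF.mp (hrepmem j)))
    · intro hj; rw [hrep_eq (rep k₀) j hj, h0]
  have key : ∀ t : Fin n,
      ((chainF r t).filter (fun k => q (psi r f c k - 1))).card
        = ((chainF r t).filter (fun k => q ((f k - 1 + c) % (n + 1)))).card := by
    intro t
    have e1 : (((chainF r t).image (fun j => psi r f c j - 1)).filter q).card
        = ((chainF r t).filter (fun k => q (psi r f c k - 1))).card := by
      rw [Finset.filter_image]
      exact Finset.card_image_of_injOn (fun j hj j' hj' h =>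
        injOn_psi hpo hchain hf1 hf2 c j (Finset.mem_of_mem_filter j hj)
          j' (Finset.mem_of_mem_filter j' hj') h)
    have e2 : (((chainF r t).image (fun j => (f j - 1 + c) % (n + 1))).filter q).card
        = ((chainF r t).filter (fun k => q ((f k - 1 + c) % (n + 1)))).card := by
      rw [Finset.filter_image]
      exact Finset.card_image_of_injOn (fun j hj j' hj' h =>
        f_injOn_chain hchain hf2 j (Finset.mem_of_mem_filter j hj)
          j' (Finset.mem_of_mem_filter j' hj') (shift_cancel hf1 h))
    rw [← e1, ← e2, image_psi hpo hchain hf1 hf2 c t]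
    rfl
  rw [Finset.card_eq_sum_card_fiberwise
      (f := rep) (t := Finset.univ.image rep)
      (fun x _ => Finset.mem_image_of_mem rep (mem_univ x)),
    Finset.card_eq_sum_card_fiberwise
      (f := rep) (t := Finset.univ.image rep)
      (fun x _ => Finset.mem_image_of_mem rep (mem_univ x))]
  apply Finset.sum_congr rfl
  intro t ht
  have hflt : ∀ (P : Fin n → Prop) [DecidablePred P],
      ((Finset.univ.filter P).filter (fun k => rep k = t)) = (chainF r t).filter P := by
    intro P _
    rw [Finset.filter_filter]
    rw [← hfiber t ht]
    ext j
    simp only [mem_filter, mem_univ, true_and]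
    tauto
  rw [hflt, hflt]
  exact key t

include hpo hchain hf1 hf2 in
lemma psi_zero (k : Fin n) : psi r f 0 k = f k := by
  classical
  have hb1 := (hf1 k).1; have hb2 := (hf1 k).2
  have hmem : f k - 1 ∈ shiftT r f 0 k := by
    apply Finset.mem_image.mpr
    exact ⟨k, self_mem_chainF hpo k, by rw [Nat.add_zero, Nat.mod_eq_of_lt (by omega)]⟩
  have hset : (chainF r k).filter (fun j => (f j - 1 + 0) % (n + 1) < f k - 1)
      = Finset.univ.filter (fun j => r j k ∧ j ≠ k) := by
    ext j
    have hj1 := (hf1 j).1; have hj2 := (hf1 j).2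
    simp only [mem_filter, mem_univ, true_and, mem_chainF, Nat.add_zero]
    rw [Nat.mod_eq_of_lt (show f j - 1 < n + 1 by omega)]
    constructor
    · rintro ⟨hcomp, hlt⟩
      have hne : j ≠ k := by rintro rfl; omega
      rcases hcomp with h | h
      · exact absurd (hf2 _ _ h (Ne.symm hne)) (by omega)
      · exact ⟨h, hne⟩
    · rintro ⟨h, hne⟩
      exact ⟨Or.inr h, by have := hf2 _ _ h hne; omega⟩
  have hcount : ((shiftT r f 0 k).filter (fun x => x < f k - 1)).card = rankF r k := by
    rw [shiftT, Finset.filter_image,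
      Finset.card_image_of_injOn (fun j hj j' hj' h =>
        f_injOn_chain hchain hf2 j (Finset.mem_of_mem_filter j hj)
          j' (Finset.mem_of_mem_filter j' hj') (shift_cancel hf1 h)),
      hset, rankF]
  unfold psi
  rw [fnth_eq hmem hcount]
  omega

include hpo hchain hf1 hf2 in
lemma shiftT_psi (c d : ℕ) (k : Fin n) : shiftT r (psi r f c) d k = shiftT r f (c + d) k := by
  show (chainF r k).image (fun j => (psi r f c j - 1 + d) % (n + 1)) = _
  have h1 : (chainF r k).image (fun j => (psi r f c j - 1 + d) % (n + 1))
      = ((chainF r k).image (fun j => psi r f c j - 1)).image (fun x => (x + d) % (n + 1)) := by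
    rw [Finset.image_image]; rfl
  rw [h1, image_psi hpo hchain hf1 hf2, shiftT, Finset.image_image, shiftT]
  apply Finset.image_congr
  intro j _
  show ((f j - 1 + c) % (n + 1) + d) % (n + 1) = (f j - 1 + (c + d)) % (n + 1)
  rw [Nat.mod_add_mod, Nat.add_assoc]

include hpo hchain hf1 hf2 in
lemma psi_comp (c d : ℕ) (k : Fin n) : psi r (psi r f c) d k = psi r f (c + d) k := by
  show fnth (shiftT r (psi r f c) d k) (rankF r k) + 1 = _
  rw [shiftT_psi hpo hchain hf1 hf2]
  rfl

lemma psi_mod (c : ℕ) (k : Fin n) : psi r f c k = psi r f (c % (n + 1)) k := by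
  unfold psi
  have : shiftT r f c k = shiftT r f (c % (n + 1)) k := by
    apply Finset.image_congr
    intro j _
    show (f j - 1 + c) % (n + 1) = (f j - 1 + c % (n + 1)) % (n + 1)
    rw [Nat.add_mod_mod]
  rw [this]

include hpo hchain hf1 hf2 in
lemma psi_count_le (c : ℕ) (i : ℕ) :
    (Finset.univ.filter (fun k => psi r f c k ≤ i)).card
      = (Finset.univ.filter (fun k => (f k - 1 + c) % (n + 1) < i)).card := by
  have h := count_psi hpo hchain hf1 hf2 c (fun x => x < i)
  rw [← h]
  apply congrArg
  apply Finset.filter_congr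
  intro k _
  have h1 := (psi_bounds hpo hchain hf1 hf2 c k).1
  constructor <;> intro <;> omega

include hpo hchain hf1 hf2 in
lemma ispf_iff_park (hn : 1 ≤ n) (c : ℕ) :
    IsPFFun n (psi r f c) ↔ ∀ i : ℕ, 1 ≤ i → i ≤ n →
      i ≤ (Finset.univ.filter (fun k => (f k - 1 + c) % (n + 1) < i)).card := by
  constructor
  · intro hpf i h1 h2
    rw [← psi_count_le hpo hchain hf1 hf2 c i]
    exact hpf.2 i h1 h2
  · intro hpark
    have hcnt := psi_count_le hpo hchain hf1 hf2 c
    constructor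
    · have hcard : (Finset.univ.filter (fun k => psi r f c k ≤ n)).card = n := by
        have hge := hpark n hn le_rfl
        rw [← hcnt n] at hge
        have hle : (Finset.univ.filter (fun k => psi r f c k ≤ n)).card ≤ n := by
          have := Finset.card_filter_le (Finset.univ : Finset (Fin n)) (fun k => psi r f c k ≤ n)
          simpa using this
        omega
      have huniv : Finset.univ.filter (fun k => psi r f c k ≤ n) = Finset.univ :=
        Finset.eq_univ_of_card _ (by simp [hcard])
      intro k
      refine ⟨(psi_bounds hpo hchain hf1 hf2 c k).1, ?_⟩
      have hk : k ∈ Finset.univ.filter (fun k => psi r f c k ≤ n) := by rw [huniv]; exact Finset.mem_univ k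
      exact (Finset.mem_filter.mp hk).2
    · intro i h1 h2
      rw [hcnt i]
      exact hpark i h1 h2

end Chains


lemma cycle_abstract (p : ℕ) (hp : 1 ≤ p) (s : ℕ → ℤ) (hs : ∀ m, s (m + p) = s m - 1) :
    ∃! a : ℕ, (1 ≤ a ∧ a ≤ p) ∧ ∀ i, i < p → s a ≤ s (a + i) := by
  classical
  obtain ⟨b, hb, hbmin⟩ := Finset.exists_min_image (Finset.Icc 1 p) s ⟨1, by simp [hp]⟩
  set A := (Finset.Icc 1 p).filter (fun a => s a = s b) with hA
  have hAne : A.Nonempty := ⟨b, by simp [hA, hb]⟩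
  set a := A.min' hAne with ha
  have haA : a ∈ A := A.min'_mem hAne
  have haIcc : a ∈ Finset.Icc 1 p := (Finset.mem_filter.mp haA).1
  have hsa : s a = s b := (Finset.mem_filter.mp haA).2
  have h1a : 1 ≤ a := (Finset.mem_Icc.mp haIcc).1
  have hap : a ≤ p := (Finset.mem_Icc.mp haIcc).2
  have hgood : ∀ i, i < p → s a ≤ s (a + i) := by
    intro i hi
    by_cases hle : a + i ≤ p
    · have hm : a + i ∈ Finset.Icc 1 p := Finset.mem_Icc.mpr ⟨by omega, hle⟩
      rw [hsa]; exact hbmin _ hm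
    · set m := a + i - p with hm
      have hmIcc : m ∈ Finset.Icc 1 p := Finset.mem_Icc.mpr ⟨by omega, by omega⟩
      have hsm : s b < s m := by
        rcases lt_or_eq_of_le (hbmin m hmIcc) with h | h
        · exact h
        · exfalso
          have hmA : m ∈ A := Finset.mem_filter.mpr ⟨hmIcc, h.symm⟩
          have := A.min'_le m hmA
          omega
      have heq : a + i = m + p := by omega
      rw [heq, hs m, hsa]; omega
  refine ⟨a, ⟨⟨h1a, hap⟩, hgood⟩, ?_⟩
  rintro y ⟨⟨h1y, hyp⟩, hy⟩
  by_contra hne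
  rcases Nat.lt_or_ge y a with h | h
  · have e1 : s y ≤ s (y + (a - y)) := hy _ (by omega)
    have e2 : s a ≤ s (a + (y + p - a)) := hgood _ (by omega)
    rw [show a + (y + p - a) = y + p by omega, hs y] at e2
    rw [show y + (a - y) = a by omega] at e1
    omega
  · have hlt : a < y := by omega
    have e1 : s a ≤ s (a + (y - a)) := hgood _ (by omega)
    have e2 : s y ≤ s (y + (a + p - y)) := hy _ (by omega)
    rw [show y + (a + p - y) = a + p by omega, hs a] at e2
    rw [show a + (y - a) = y by omega] at e1
    omega

lemma cycle_abstract' (p : ℕ) (hp : 1 ≤ p) (s : ℕ → ℤ) (hs : ∀ m, s (m + p) = s m - 1) :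
    ∃! a : ℕ, (1 ≤ a ∧ a ≤ p) ∧ ∀ i, i < p → s a ≤ s (a + i) := cycle_abstract p hp s hs

lemma mod_rot_aux {p m a : ℕ} (hp : 1 ≤ p) (ha : a < p) :
    (m + a + (p - m % p)) % p = a := by
  have h1 : m % p < p := Nat.mod_lt _ (by omega)
  have h2 := Nat.div_add_mod m p
  have h3 : m + a + (p - m % p) = a + p * (m / p) + p := by omega
  rw [h3, Nat.add_mod_right, Nat.add_mul_mod_self_left, Nat.mod_eq_of_lt ha]

lemma exists_unique_park {n : ℕ} (hn : 1 ≤ n) {f : Fin n → ℕ}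
    (hf1 : ∀ k, 1 ≤ f k ∧ f k ≤ n + 1) :
    ∃! c : ℕ, c < n + 1 ∧ ∀ i : ℕ, 1 ≤ i → i ≤ n →
      i ≤ (Finset.univ.filter (fun k => (f k - 1 + c) % (n + 1) < i)).card := by
  classical
  set p := n + 1 with hp
  have hp1 : 1 ≤ p := by omega
  set d : ℕ → ℕ := fun j => (Finset.univ.filter (fun k : Fin n => f k - 1 = j)).card with hd
  set s : ℕ → ℤ := fun m => (∑ j ∈ Finset.range m, (d (j % p) : ℤ)) - m with hsdef
  have hsumd : ∑ j ∈ Finset.range p, (d j : ℤ) = n := by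
    have h := Finset.card_eq_sum_card_fiberwise
      (f := fun k : Fin n => f k - 1) (t := Finset.range p) (s := Finset.univ)
      (fun k _ => Finset.mem_range.mpr (show f k - 1 < p by have := hf1 k; omega))
    rw [Finset.card_univ, Fintype.card_fin] at h
    exact_mod_cast h.symm
  have hshift : ∀ m, s (m + p) = s m - 1 := by
    intro m
    have hsplit : ∑ j ∈ Finset.range m, (d (j % p) : ℤ)
          + ∑ j ∈ Finset.Ico m (m + p), (d (j % p) : ℤ)
        = ∑ j ∈ Finset.range (m + p), (d (j % p) : ℤ) := by
      rw [Finset.range_eq_Ico, Finset.range_eq_Ico]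
      exact Finset.sum_Ico_consecutive _ (Nat.zero_le m) (Nat.le_add_right m p)
    have hIco : ∑ j ∈ Finset.Ico m (m + p), (d (j % p) : ℤ)
        = ∑ j ∈ Finset.range p, (d ((m + j) % p) : ℤ) := by
      rw [Finset.sum_Ico_eq_sum_range]; simp
    have hrot : ∑ j ∈ Finset.range p, (d ((m + j) % p) : ℤ)
        = ∑ j ∈ Finset.range p, (d (j % p) : ℤ) := by
      apply Finset.sum_nbij' (i := fun j => (m + j) % p) (j := fun j => (j + (p - m % p)) % p)
      · intro a _; exact Finset.mem_range.mpr (Nat.mod_lt _ (by omega))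
      · intro a _; exact Finset.mem_range.mpr (Nat.mod_lt _ (by omega))
      · intro a ha
        rw [Nat.mod_add_mod]
        exact mod_rot_aux hp1 (Finset.mem_range.mp ha)
      · intro a ha
        rw [Nat.add_mod_mod, show m + (a + (p - m % p)) = m + a + (p - m % p) by omega]
        exact mod_rot_aux hp1 (Finset.mem_range.mp ha)
      · intro a _
        rw [Nat.mod_mod_of_dvd _ dvd_rfl]
    have hcongr : ∑ j ∈ Finset.range p, (d (j % p) : ℤ) = ∑ j ∈ Finset.range p, (d j : ℤ) :=
      Finset.sum_congr rfl (fun j hj => by rw [Nat.mod_eq_of_lt (Finset.mem_range.mp hj)])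
    have hfin : ∑ j ∈ Finset.range (m + p), (d (j % p) : ℤ)
        = ∑ j ∈ Finset.range m, (d (j % p) : ℤ) + n := by
      rw [← hsplit, hIco, hrot, hcongr, hsumd]
    simp only [hsdef]
    rw [hfin]
    push_cast
    have hp' : (p : ℤ) = n + 1 := by omega
    linarith
  have hcount : ∀ c, c < p → ∀ i, 1 ≤ i → i ≤ p →
      ((Finset.univ.filter (fun k => (f k - 1 + c) % p < i)).card : ℤ)
        = s ((p - c) + i) - s (p - c) + i := by
    intro c hc i hi1 hip
    set a := p - c with hadef
    have hac : a + c = p := by omega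
    have hstep1 : (Finset.univ.filter (fun k => (f k - 1 + c) % p < i)).card
        = ∑ j ∈ Finset.range i, ((Finset.univ.filter (fun k => (f k - 1 + c) % p < i)).filter
            (fun k => (f k - 1 + c) % p = j)).card := by
      apply Finset.card_eq_sum_card_fiberwise
        (f := fun k : Fin n => (f k - 1 + c) % p) (t := Finset.range i)
      intro k hk
      exact Finset.mem_range.mpr (Finset.mem_filter.mp hk).2
    have hstep1b : ∀ j, j < i →
        ((Finset.univ.filter (fun k => (f k - 1 + c) % p < i)).filter
            (fun k => (f k - 1 + c) % p = j))
          = Finset.univ.filter (fun k => (f k - 1 + c) % p = j) := by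
      intro j hj; ext k; simp only [Finset.mem_filter, Finset.mem_univ, true_and]
      exact ⟨fun h => h.2, fun h => ⟨by omega, h⟩⟩
    have hstep2 : ∀ j, j < i →
        (Finset.univ.filter (fun k => (f k - 1 + c) % p = j)).card = d ((a + j) % p) := by
      intro j hj
      have hjp : j < p := by omega
      simp only [hd]
      congr 1
      ext k
      simp only [Finset.mem_filter, Finset.mem_univ, true_and]
      have hb : f k - 1 < p := by have := hf1 k; omega
      constructor
      · intro h
        rw [← h, Nat.add_mod_mod, show a + (f k - 1 + c) = f k - 1 + (a + c) by ring, hac,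
          Nat.add_mod_right, Nat.mod_eq_of_lt hb]
      · intro h
        rw [h, Nat.mod_add_mod, show a + j + c = j + (a + c) by omega, hac,
          Nat.add_mod_right, Nat.mod_eq_of_lt hjp]
    have hstep3 : (∑ j ∈ Finset.range i, (d ((a + j) % p) : ℤ)) = s (a + i) - s a + i := by
      have hIco : ∑ j ∈ Finset.Ico a (a + i), (d (j % p) : ℤ)
          = ∑ j ∈ Finset.range i, (d ((a + j) % p) : ℤ) := by
        rw [Finset.sum_Ico_eq_sum_range]; simp
      have hsplit2 : ∑ j ∈ Finset.range a, (d (j % p) : ℤ)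
            + ∑ j ∈ Finset.Ico a (a + i), (d (j % p) : ℤ)
          = ∑ j ∈ Finset.range (a + i), (d (j % p) : ℤ) := by
        rw [Finset.range_eq_Ico, Finset.range_eq_Ico]
        exact Finset.sum_Ico_consecutive _ (Nat.zero_le a) (Nat.le_add_right a i)
      simp only [hsdef]
      push_cast
      linarith
    calc ((Finset.univ.filter (fun k => (f k - 1 + c) % p < i)).card : ℤ)
        = ∑ j ∈ Finset.range i, (((Finset.univ.filter (fun k => (f k - 1 + c) % p < i)).filter
            (fun k => (f k - 1 + c) % p = j)).card : ℤ) := by exact_mod_cast hstep1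
      _ = ∑ j ∈ Finset.range i, (d ((a + j) % p) : ℤ) := by
          apply Finset.sum_congr rfl
          intro j hj
          rw [hstep1b j (Finset.mem_range.mp hj), hstep2 j (Finset.mem_range.mp hj)]
      _ = s (a + i) - s a + i := hstep3
  obtain ⟨a, ⟨⟨h1a, hap⟩, hgood⟩, huniq⟩ := cycle_abstract p hp1 s hshift
  refine ⟨p - a, ⟨by omega, ?_⟩, ?_⟩
  · intro i hi1 hin
    have hc : p - a < p := by omega
    have hcc := hcount (p - a) hc i hi1 (by omega)
    rw [show p - (p - a) = a by omega] at hcc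
    have hg := hgood i (by omega)
    omega
  · rintro c ⟨hc, hpark⟩
    have h1 : 1 ≤ p - c := by omega
    have hgood' : ∀ i, i < p → s (p - c) ≤ s ((p - c) + i) := by
      intro i hi
      rcases Nat.eq_zero_or_pos i with rfl | hipos
      · simp
      · have hcc := hcount c hc i hipos (by omega)
        have hp2 := hpark i hipos (by omega)
        omega
    have := huniq (p - c) ⟨⟨h1, by omega⟩, hgood'⟩
    omega

theorem stmt18 (n : ℕ) (hn : 1 ≤ n) (r : Fin n → Fin n → Prop)
    (hpo : IsPartialOrder (Fin n) r)
    -- the comparability relation is transitive (hence an equivalence relation),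
    -- i.e. the poset is a disjoint union of chains
    (hchain : ∀ i j k : Fin n, (r i j ∨ r j i) → (r j k ∨ r k j) → (r i k ∨ r k i)) :
    Set.ncard {f : Fin n → ℕ | (∀ i, 1 ≤ f i ∧ f i ≤ n + 1) ∧
        ∀ i j : Fin n, r i j → i ≠ j → f i < f j}
      = (n + 1) *
        Set.ncard {π : Fin n → ℕ | IsPFFun n π ∧
          ∀ i j : Fin n, r i j → i ≠ j → π i < π j} := by
  classical
  set A : Set (Fin n → ℕ) := {f : Fin n → ℕ | (∀ i, 1 ≤ f i ∧ f i ≤ n + 1) ∧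
        ∀ i j : Fin n, r i j → i ≠ j → f i < f j} with hA
  set B : Set (Fin n → ℕ) := {π : Fin n → ℕ | IsPFFun n π ∧
          ∀ i j : Fin n, r i j → i ≠ j → π i < π j} with hB
  -- recovery lemma
  have hrec : ∀ (g : Fin n → ℕ), (∀ k, 1 ≤ g k ∧ g k ≤ n + 1) →
      (∀ i j : Fin n, r i j → i ≠ j → g i < g j) → ∀ (c : ℕ), c < n + 1 →
      psi r (psi r g c) ((n + 1 - c) % (n + 1)) = g := by
    intro g h1 h2 c hc
    funext k
    rw [psi_comp hpo hchain h1 h2, psi_mod]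
    have hz : (c + (n + 1 - c) % (n + 1)) % (n + 1) = 0 := by
      by_cases hc0 : c = 0
      · subst hc0; simp
      · rw [Nat.mod_eq_of_lt (show n + 1 - c < n + 1 by omega),
          show c + (n + 1 - c) = n + 1 by omega, Nat.mod_self]
    rw [hz]
    exact psi_zero hpo hchain h1 h2 k
  have hinj_e : ∀ c c' : ℕ, c < n + 1 → c' < n + 1 →
      (n + 1 - c) % (n + 1) = (n + 1 - c') % (n + 1) → c = c' := by
    intro c c' hc hc' h
    by_cases h0 : c = 0 <;> by_cases h0' : c' = 0
    · omega
    · subst h0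
      rw [Nat.sub_zero, Nat.mod_self, Nat.mod_eq_of_lt (by omega)] at h
      omega
    · subst h0'
      rw [Nat.sub_zero, Nat.mod_self, Nat.mod_eq_of_lt (by omega)] at h
      omega
    · rw [Nat.mod_eq_of_lt (by omega), Nat.mod_eq_of_lt (by omega)] at h
      omega
  have hmemA : ∀ (π : Fin n → ℕ), π ∈ B → ∀ c : ℕ, psi r π c ∈ A := by
    intro π hπ c
    have hb : ∀ k, 1 ≤ π k ∧ π k ≤ n + 1 := by
      intro k; have := hπ.1.1 k; omega
    exact ⟨fun k => psi_bounds hpo hchain hb hπ.2 c k,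
      fun i j hij hne => psi_mono hpo hchain hb hπ.2 c hij hne⟩
  let Φ : Fin (n + 1) × ↥B → ↥A := fun cp => ⟨psi r cp.2.1 cp.1.1, hmemA cp.2.1 cp.2.2 cp.1.1⟩
  have hbij : Function.Bijective Φ := by
    constructor
    · rintro ⟨c, π, hπ⟩ ⟨c', π', hπ'⟩ h
      have hval : psi r π (c : ℕ) = psi r π' (c' : ℕ) := congrArg Subtype.val h
      have hbπ : ∀ k, 1 ≤ π k ∧ π k ≤ n + 1 := by intro k; have := hπ.1.1 k; omega
      have hbπ' : ∀ k, 1 ≤ π' k ∧ π' k ≤ n + 1 := by intro k; have := hπ'.1.1 k; omega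
      have hg1 : ∀ k, 1 ≤ psi r π (c : ℕ) k ∧ psi r π (c : ℕ) k ≤ n + 1 :=
        fun k => psi_bounds hpo hchain hbπ hπ.2 _ k
      have hg2 : ∀ i j : Fin n, r i j → i ≠ j → psi r π (c : ℕ) i < psi r π (c : ℕ) j :=
        fun i j hij hne => psi_mono hpo hchain hbπ hπ.2 _ hij hne
      have hπg : psi r (psi r π (c : ℕ)) ((n + 1 - (c : ℕ)) % (n + 1)) = π :=
        hrec π hbπ hπ.2 _ c.isLt
      have hπg' : psi r (psi r π (c : ℕ)) ((n + 1 - (c' : ℕ)) % (n + 1)) = π' := by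
        rw [hval]; exact hrec π' hbπ' hπ'.2 _ c'.isLt
      have hpark := (ispf_iff_park hpo hchain hg1 hg2 hn _).mp (by rw [hπg]; exact hπ.1)
      have hpark' := (ispf_iff_park hpo hchain hg1 hg2 hn _).mp (by rw [hπg']; exact hπ'.1)
      obtain ⟨c₀, _, huniq⟩ := exists_unique_park hn hg1
      have hee : (n + 1 - (c : ℕ)) % (n + 1) = (n + 1 - (c' : ℕ)) % (n + 1) := by
        rw [huniq _ ⟨Nat.mod_lt _ (by omega), hpark⟩,
          huniq _ ⟨Nat.mod_lt _ (by omega), hpark'⟩]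
      have hcc : (c : ℕ) = (c' : ℕ) := hinj_e _ _ c.isLt c'.isLt hee
      have hππ : π = π' := by rw [← hπg, ← hπg', hee]
      exact Prod.ext (Fin.ext hcc) (Subtype.ext hππ)
    · rintro ⟨g, hg⟩
      have hg1 : ∀ k, 1 ≤ g k ∧ g k ≤ n + 1 := hg.1
      have hg2 : ∀ i j : Fin n, r i j → i ≠ j → g i < g j := hg.2
      obtain ⟨c, ⟨hc, hpark⟩, _⟩ := exists_unique_park hn hg1
      have hπpf : IsPFFun n (psi r g c) :=
        (ispf_iff_park hpo hchain hg1 hg2 hn c).mpr hpark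
      have hπB : psi r g c ∈ B :=
        ⟨hπpf, fun i j hij hne => psi_mono hpo hchain hg1 hg2 c hij hne⟩
      have he : (n + 1 - c) % (n + 1) < n + 1 := Nat.mod_lt _ (by omega)
      refine ⟨(⟨(n + 1 - c) % (n + 1), he⟩, ⟨psi r g c, hπB⟩), ?_⟩
      exact Subtype.ext (hrec g hg1 hg2 c hc)
  calc Set.ncard A = Nat.card ↥A := (Nat.card_coe_set_eq A).symm
    _ = Nat.card (Fin (n + 1) × ↥B) := (Nat.card_eq_of_bijective Φ hbij).symm
    _ = (n + 1) * Set.ncard B := by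
        rw [Nat.card_prod, Nat.card_eq_fintype_card, Fintype.card_fin,
          Nat.card_coe_set_eq]
end
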